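/- Let κ be a kernel satisfying (κ₁) for order 2 and (κ₂). Then for every h ∈ V₊^w(ℝ₊) (nonnegative, with w·h log-uniformly continuous and bounded), the weighted uniform convergence holds: lim_{m→∞} sup_{z>0} w(z) |M_m^κ(h, z) − h(z)| = 0. -/

import Mathlib

open Real MeasureTheory

private lemma arith1 (x y : ℝ) (hxy : |x - y| ≤ 1) : 1 + x ^ 2 ≤ 3 * (1 + y ^ 2) := by
  have hd : (x - y) ^ 2 ≤ 1 := by
    rw [← sq_abs]
    nlinarith [abs_nonneg (x - y)]
  nlinarith [sq_nonneg (x - 2 * y), sq_nonneg y]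

private lemma arith2 (y : ℝ) : 1 + 2 * |y| ≤ 2 * (1 + y ^ 2) := by
  nlinarith [sq_nonneg (|y| - 1), sq_abs y]

private lemma arith3 (v ℓ : ℝ) : v ^ 2 ≤ 2 * ℓ ^ 2 + 2 * (v - ℓ) ^ 2 := by
  nlinarith [sq_nonneg (v - 2 * ℓ)]

private lemma arith_far (K M2 ζ ε δ W m t2 : ℝ) (hK0 : 0 ≤ K) (hM20 : 0 ≤ M2)
    (hζ : 0 < ζ) (hε : 0 < ε) (hδ : 0 < δ) (hδ1 : δ ≤ 1) (hW1 : 1 ≤ W)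
    (hm0 : 0 < m) (ht2 : 0 < t2) (hδ2t2 : δ ^ 2 ≤ t2)
    (hq : 33 * (K + 1) * (M2 + 1) ≤ m ^ 2 * (δ ^ 2 * ζ * ε)) :
    M2 / (m ^ 2 * t2) * (K * (3 * W + 8 * t2)) ≤ ζ * ε / 3 * W := by
  have hW0 : (0:ℝ) < W := by linarith
  rw [div_mul_eq_mul_div, div_le_iff₀ (by positivity)]
  have hδ21 : δ ^ 2 ≤ 1 := by nlinarith
  have h33 : 33 * K * M2 ≤ m ^ 2 * (δ ^ 2 * ζ * ε) := by nlinarith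
  have step1 : (M2 * (K * (3 * W + 8 * t2))) * (3 * δ ^ 2) ≤ 33 * K * M2 * (W * t2) := by
    nlinarith [mul_nonneg (mul_nonneg (mul_nonneg hK0 hM20) hW0.le) (sub_nonneg.2 hδ2t2),
      mul_nonneg (mul_nonneg (mul_nonneg hK0 hM20) ht2.le)
        (sub_nonneg.2 (le_trans hδ21 hW1))]
  have step2 : 33 * K * M2 * (W * t2) ≤ (m ^ 2 * (δ ^ 2 * ζ * ε)) * (W * t2) :=
    mul_le_mul_of_nonneg_right h33 (by positivity)
  have step3 : (m ^ 2 * (δ ^ 2 * ζ * ε)) * (W * t2)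
      = (ζ * ε / 3 * W * (m ^ 2 * t2)) * (3 * δ ^ 2) := by ring
  refine le_of_mul_le_mul_right ?_ (by positivity : (0:ℝ) < 3 * δ ^ 2)
  linarith [step1, step2, step3.le, step3.ge]

private lemma maxprod_err (F G : ℤ → ℝ) (B ζ C hv : ℝ) (hζ : 0 < ζ)
    (hFB : ∀ j, F j ≤ B) (hFζ : ∃ j, ζ ≤ F j) (hG0 : ∀ j, 0 ≤ G j)
    (hv0 : 0 ≤ hv) (hC0 : 0 ≤ C) (hkey : ∀ j, |F j| * |G j - hv| ≤ C) :
    |sSup (Set.range fun j => F j * G j) / sSup (Set.range F) - hv| ≤ C / ζ := by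
  obtain ⟨j₀, hj₀⟩ := hFζ
  have hbddF : BddAbove (Set.range F) := ⟨B, by rintro x ⟨j, rfl⟩; exact hFB j⟩
  set D := sSup (Set.range F) with hD
  have hζD : ζ ≤ D := le_trans hj₀ (le_csSup hbddF ⟨j₀, rfl⟩)
  have hD0 : 0 < D := lt_of_lt_of_le hζ hζD
  have hFD : ∀ j, F j ≤ D := fun j => le_csSup hbddF ⟨j, rfl⟩
  have hup : ∀ j, F j * G j ≤ C + D * hv := by
    intro j
    have h1 : F j * G j = F j * (G j - hv) + F j * hv := by ring
    have h2 : F j * (G j - hv) ≤ C := le_trans (le_abs_self _) (by rw [abs_mul]; exact hkey j)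
    have h3 : F j * hv ≤ D * hv := mul_le_mul_of_nonneg_right (hFD j) hv0
    linarith
  have hbddA : BddAbove (Set.range fun j => F j * G j) :=
    ⟨C + D * hv, by rintro x ⟨j, rfl⟩; exact hup j⟩
  set N := sSup (Set.range fun j => F j * G j) with hN
  have hNup : N ≤ C + D * hv := csSup_le (Set.range_nonempty _) (by rintro x ⟨j, rfl⟩; exact hup j)
  have hNj : ∀ j, F j * G j ≤ N := fun j => le_csSup hbddA ⟨j, rfl⟩
  have hlow : ∀ j, F j * hv ≤ N + C := by
    intro j
    have h2 : -C ≤ F j * (G j - hv) := by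
      have h4 := hkey j; rw [← abs_mul] at h4
      linarith [neg_abs_le (F j * (G j - hv))]
    have h1 : F j * hv = F j * G j - F j * (G j - hv) := by ring
    linarith [hNj j]
  have hDlow : D * hv ≤ N + C := by
    rcases eq_or_lt_of_le hv0 with h0 | h0
    · have hN0 : 0 ≤ N := le_trans (mul_nonneg (le_trans hζ.le hj₀) (hG0 j₀)) (hNj j₀)
      rw [← h0, mul_zero]; linarith
    · have hDle : D ≤ (N + C) / hv :=
        csSup_le (Set.range_nonempty _) (by rintro x ⟨j, rfl⟩; rw [le_div_iff₀ h0]; exact hlow j)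
      calc D * hv ≤ ((N + C) / hv) * hv := mul_le_mul_of_nonneg_right hDle h0.le
        _ = N + C := div_mul_cancel₀ _ (ne_of_gt h0)
  have heq : N / D - hv = (N - D * hv) / D := by field_simp
  rw [heq, abs_div, abs_of_pos hD0]
  have habs : |N - D * hv| ≤ C := abs_le.mpr ⟨by linarith, by linarith⟩
  calc |N - D * hv| / D ≤ C / D := by gcongr
    _ ≤ C / ζ := by gcongr

/-- Max-product Kantorovich exponential sampling operator over all integers. -/
noncomputable def MopZ (κ : ℝ → ℝ) (m : ℝ) (h : ℝ → ℝ) (z : ℝ) : ℝ :=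
  sSup (Set.range fun j : ℤ => κ (Real.exp (-(j : ℝ)) * z ^ m) *
      (m * ∫ v in (j : ℝ)/m..((j : ℝ) + 1)/m, h (Real.exp v))) /
  sSup (Set.range fun j : ℤ => κ (Real.exp (-(j : ℝ)) * z ^ m))

/-- Log-uniform continuity on the positive reals. -/
def LogUC (g : ℝ → ℝ) : Prop :=
  ∀ ε : ℝ, 0 < ε → ∃ δ : ℝ, 0 < δ ∧ ∀ z₁ : ℝ, 0 < z₁ → ∀ z₂ : ℝ, 0 < z₂ →
    |Real.log z₁ - Real.log z₂| ≤ δ → |g z₁ - g z₂| < ε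

/-- Membership in the weighted space `V^w(ℝ₊)`, `w z = 1/(1+(log z)^2)`. -/
def MemVw (h : ℝ → ℝ) : Prop :=
  LogUC (fun z => h z / (1 + (Real.log z) ^ 2)) ∧
    ∃ K : ℝ, ∀ z : ℝ, 0 < z → |h z| / (1 + (Real.log z) ^ 2) ≤ K

/-- Weighted logarithmic modulus of continuity. -/
noncomputable def Upsilon (h : ℝ → ℝ) (ρ : ℝ) : ℝ :=
  sSup {y : ℝ | ∃ u z : ℝ, 0 < u ∧ 0 < z ∧ |Real.log u| ≤ ρ ∧
    y = |h (u * z) - h z| / ((1 + (Real.log z) ^ 2) * (1 + (Real.log u) ^ 2))}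

set_option maxHeartbeats 2000000 in
theorem MopZ_weighted_uniform_convergence (κ : ℝ → ℝ) (hκmeas : Measurable κ)
    (B M2 ζ : ℝ) (hκb : ∀ x : ℝ, 0 < x → |κ x| ≤ B)
    (hm2 : ∀ s : ℝ, 0 < s → ∀ j : ℤ,
      |κ (Real.exp (-(j : ℝ)) * s)| * |(j : ℝ) - Real.log s| ^ 2 ≤ M2)
    (hζ : 0 < ζ) (hinf : ∀ u ∈ Set.Icc (1 : ℝ) (Real.exp 1), ζ ≤ κ u)
    (h : ℝ → ℝ) (hmeas : Measurable h) (hpos : ∀ x : ℝ, 0 < x → 0 ≤ h x)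
    (hmem : MemVw h) :
    ∀ ε : ℝ, 0 < ε → ∃ M : ℝ, ∀ m : ℝ, M ≤ m → ∀ z : ℝ, 0 < z →
      |MopZ κ m h z - h z| / (1 + (Real.log z) ^ 2) < ε := by
  intro ε hε
  obtain ⟨hg, K, hK⟩ := hmem
  have hK0 : 0 ≤ K := le_trans (by positivity) (hK 1 one_pos)
  have h1e : (1:ℝ) ∈ Set.Icc (1:ℝ) (Real.exp 1) :=
    ⟨le_refl 1, by linarith [Real.add_one_le_exp (1:ℝ)]⟩
  have hζB : ζ ≤ B := le_trans (hinf 1 h1e) (le_trans (le_abs_self _) (hκb 1 one_pos))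
  have hB0 : 0 < B := lt_of_lt_of_le hζ hζB
  have hM20 : 0 ≤ M2 := le_trans (by positivity) (hm2 1 one_pos 0)
  set ε' : ℝ := ζ * ε / (18 * B) with hε'def
  have hε'pos : 0 < ε' := by positivity
  obtain ⟨δ₀, hδ₀pos, hδ₀⟩ := hg ε' hε'pos
  set δ : ℝ := min (δ₀ / 2) (min (1/2) (ζ * ε / (24 * B * (K + 1)))) with hδdef
  have hδpos : 0 < δ :=
    lt_min (by positivity) (lt_min (by norm_num) (by positivity))
  have hδhalf : δ ≤ 1/2 := le_trans (min_le_right _ _) (min_le_left _ _)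
  have hδδ₀ : 2 * δ ≤ δ₀ := by
    have h5 := min_le_left (δ₀/2) (min (1/2) (ζ * ε / (24 * B * (K + 1))))
    rw [← hδdef] at h5; linarith
  have hδK : δ ≤ ζ * ε / (24 * B * (K + 1)) := le_trans (min_le_right _ _) (min_le_right _ _)
  set M : ℝ := max (2 / δ) (Real.sqrt (33 * (K + 1) * (M2 + 1) / (δ ^ 2 * ζ * ε)) + 1) with hMdef
  refine ⟨M, fun m hm z hz => ?_⟩
  have hm2δ : 2 / δ ≤ m := le_trans (le_max_left _ _) hm
  have hm4 : 4 ≤ m := by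
    refine le_trans ?_ hm2δ
    rw [le_div_iff₀ hδpos]; linarith
  have hm0 : 0 < m := by linarith
  have hmδ2 : 2 ≤ m * δ := by rwa [div_le_iff₀ hδpos] at hm2δ
  have hmδ : 1 / m ≤ δ / 2 := by
    rw [div_le_div_iff₀ hm0 (by norm_num : (0:ℝ) < 2)]; linarith
  have hmsq : 33 * (K + 1) * (M2 + 1) / (δ ^ 2 * ζ * ε) ≤ m ^ 2 := by
    have h6 : Real.sqrt (33 * (K + 1) * (M2 + 1) / (δ ^ 2 * ζ * ε)) ≤ m :=
      le_trans (by linarith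
        [le_max_right (2/δ) (Real.sqrt (33 * (K + 1) * (M2 + 1) / (δ ^ 2 * ζ * ε)) + 1)]) hm
    calc 33 * (K + 1) * (M2 + 1) / (δ ^ 2 * ζ * ε)
        = Real.sqrt (33 * (K + 1) * (M2 + 1) / (δ ^ 2 * ζ * ε)) ^ 2 :=
          (Real.sq_sqrt (by positivity)).symm
      _ ≤ m ^ 2 := pow_le_pow_left₀ (Real.sqrt_nonneg _) h6 2
  set ℓ : ℝ := Real.log z with hℓdef
  set W : ℝ := 1 + ℓ ^ 2 with hWdef
  have hW1 : 1 ≤ W := by rw [hWdef]; linarith [sq_nonneg ℓ]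
  have hW0 : 0 < W := by linarith
  have hzm : (0:ℝ) < z ^ m := Real.rpow_pos_of_pos hz m
  have hlogzm : Real.log (z ^ m) = m * ℓ := by rw [Real.log_rpow hz]
  have hexpzm : ∀ j : ℤ, Real.exp (-(j:ℝ)) * z ^ m = Real.exp (m * ℓ - j) := by
    intro j
    rw [Real.rpow_def_of_pos hz, ← Real.exp_add]
    congr 1; rw [hℓdef]; ring
  -- continuity of v ↦ h (exp v)
  have hgcont : Continuous fun v : ℝ => h (Real.exp v) / (1 + v ^ 2) := by
    rw [Metric.continuous_iff]
    intro v εc hεc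
    obtain ⟨d, hd, H⟩ := hg εc hεc
    refine ⟨d, hd, fun v' hv' => ?_⟩
    have h7 := H (Real.exp v') (Real.exp_pos _) (Real.exp v) (Real.exp_pos _)
      (by rw [Real.log_exp, Real.log_exp]; rw [Real.dist_eq] at hv'; exact hv'.le)
    rw [Real.dist_eq]
    simpa [Real.log_exp] using h7
  have hfcont : Continuous fun v : ℝ => h (Real.exp v) := by
    have heq : (fun v : ℝ => h (Real.exp v)) =
        fun v => (h (Real.exp v) / (1 + v ^ 2)) * (1 + v ^ 2) := by
      funext v
      have hne : (1:ℝ) + v ^ 2 ≠ 0 := by positivity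
      field_simp
    rw [heq]
    exact hgcont.mul (continuous_const.add (continuous_pow 2))
  have hgb : ∀ v : ℝ, |h (Real.exp v)| ≤ K * (1 + v ^ 2) := by
    intro v
    have h8 := hK (Real.exp v) (Real.exp_pos v)
    rw [Real.log_exp] at h8
    rw [div_le_iff₀ (by positivity)] at h8
    linarith
  have hhzb : |h z| ≤ K * W := by
    have h8 := hK z hz
    rw [div_le_iff₀ (by positivity)] at h8
    rw [hWdef]; linarith
  -- key per-j estimate
  have key : ∀ j : ℤ, |κ (Real.exp (-(j:ℝ)) * z ^ m)| *
      |m * (∫ v in (j:ℝ)/m..((j:ℝ)+1)/m, h (Real.exp v)) - h z| ≤ ζ * ε / 3 * W := by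
    intro j
    set a : ℝ := (j:ℝ)/m with hadef
    set b : ℝ := ((j:ℝ)+1)/m with hbdef
    have hab : a ≤ b := by
      rw [hadef, hbdef, div_le_div_iff₀ hm0 hm0]
      exact mul_le_mul_of_nonneg_right (by linarith) hm0.le
    have hba : b - a = 1/m := by rw [hadef, hbdef, div_sub_div_same]; ring_nf
    have hint : IntervalIntegrable (fun v => h (Real.exp v)) volume a b :=
      hfcont.intervalIntegrable a b
    have hid : m * (∫ v in a..b, h (Real.exp v)) - h z
        = m * ∫ v in a..b, (h (Real.exp v) - h z) := by
      rw [intervalIntegral.integral_sub hint (intervalIntegrable_const),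
        intervalIntegral.integral_const, hba, smul_eq_mul]
      field_simp
    have habs : ∀ S : ℝ, (∀ v ∈ Set.uIoc a b, |h (Real.exp v) - h z| ≤ S) →
        |m * (∫ v in a..b, h (Real.exp v)) - h z| ≤ S := by
      intro S hS
      rw [hid, abs_mul, abs_of_pos hm0]
      have h9 := intervalIntegral.norm_integral_le_of_norm_le_const
        (f := fun v => h (Real.exp v) - h z) (C := S) (a := a) (b := b)
        (fun x hx => by rw [Real.norm_eq_abs]; exact hS x hx)
      rw [Real.norm_eq_abs] at h9
      have hba' : |b - a| = 1/m := by rw [hba]; exact abs_of_pos (by positivity)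
      rw [hba'] at h9
      calc m * |∫ v in a..b, (h (Real.exp v) - h z)| ≤ m * (S * (1/m)) :=
            mul_le_mul_of_nonneg_left h9 hm0.le
        _ = S := by field_simp
    by_cases hnear : |(j:ℝ) - m * ℓ| ≤ m * δ
    · -- NEAR CASE
      have haℓ : |a - ℓ| ≤ δ := by
        have h10 : a - ℓ = ((j:ℝ) - m * ℓ)/m := by rw [hadef]; field_simp
        rw [h10, abs_div, abs_of_pos hm0, div_le_iff₀ hm0]
        rw [mul_comm δ m]; exact hnear
      have hvclose : ∀ v ∈ Set.uIoc a b, |v - ℓ| ≤ 2 * δ := by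
        intro v hv
        rw [Set.uIoc_of_le hab] at hv
        rw [abs_le]; rw [abs_le] at haℓ
        have h11 : 1/m ≤ δ := le_trans hmδ (by linarith)
        constructor
        · linarith [hv.1.le]
        · have hvb : v ≤ b := hv.2
          linarith [hba]
      have hpw : ∀ v ∈ Set.uIoc a b, |h (Real.exp v) - h z| ≤ (3 * ε' + 4 * K * δ) * W := by
        intro v hv
        have hvℓ := hvclose v hv
        have hgd : |h (Real.exp v) / (1 + v ^ 2) - h z / (1 + ℓ ^ 2)| ≤ ε' := by
          have h12 := hδ₀ (Real.exp v) (Real.exp_pos v) z hz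
            (by rw [Real.log_exp]; exact hvℓ.trans hδδ₀)
          simp only [Real.log_exp] at h12
          exact h12.le
        set gv : ℝ := h (Real.exp v) / (1 + v ^ 2) with hgvdef
        set gz : ℝ := h z / (1 + ℓ ^ 2) with hgzdef
        have hv2 : (0:ℝ) < 1 + v ^ 2 := by positivity
        have hhv : h (Real.exp v) = gv * (1 + v ^ 2) := by
          rw [hgvdef, div_mul_cancel₀ _ (ne_of_gt hv2)]
        have hhz : h z = gz * W := by
          rw [hgzdef, hWdef, div_mul_cancel₀ _ (by positivity : (1:ℝ) + ℓ ^ 2 ≠ 0)]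
        have h1v : 1 + v ^ 2 ≤ 3 * W := by
          rw [hWdef]; exact arith1 v ℓ (by linarith)
        have hgzK : |gz| ≤ K := by
          rw [hgzdef, abs_div, abs_of_pos (by positivity : (0:ℝ) < 1 + ℓ ^ 2)]
          exact hK z hz
        have hv2ℓ2 : |v ^ 2 - ℓ ^ 2| ≤ 4 * δ * W := by
          have h15 : v ^ 2 - ℓ ^ 2 = (v - ℓ) * (v + ℓ) := by ring
          rw [h15, abs_mul]
          have h16 : |v + ℓ| ≤ 1 + 2 * |ℓ| := by
            calc |v + ℓ| = |(v - ℓ) + 2 * ℓ| := by ring_nf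
              _ ≤ |v - ℓ| + |2 * ℓ| := abs_add_le _ _
              _ ≤ 2 * δ + 2 * |ℓ| := by rw [abs_mul, abs_two]; linarith [hvℓ]
              _ ≤ 1 + 2 * |ℓ| := by linarith
          have h17 : 1 + 2 * |ℓ| ≤ 2 * W := by rw [hWdef]; exact arith2 ℓ
          calc |v - ℓ| * |v + ℓ| ≤ (2 * δ) * (2 * W) :=
                mul_le_mul hvℓ (le_trans h16 h17) (abs_nonneg _) (by positivity)
            _ = 4 * δ * W := by ring
        calc |h (Real.exp v) - h z| = |(gv - gz) * (1 + v ^ 2) + gz * (v ^ 2 - ℓ ^ 2)| := by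
              rw [hhv, hhz, hWdef]; congr 1; ring
          _ ≤ |gv - gz| * (1 + v ^ 2) + |gz| * |v ^ 2 - ℓ ^ 2| := by
              refine le_trans (abs_add_le _ _) ?_
              rw [abs_mul, abs_mul, abs_of_pos hv2]
          _ ≤ ε' * (3 * W) + K * (4 * δ * W) :=
              add_le_add (mul_le_mul hgd h1v hv2.le hε'pos.le)
                (mul_le_mul hgzK hv2ℓ2 (abs_nonneg _) hK0)
          _ = (3 * ε' + 4 * K * δ) * W := by ring
      have hBbound : B * ((3 * ε' + 4 * K * δ) * W) ≤ ζ * ε / 3 * W := by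
        have e1 : B * (3 * ε') = ζ * ε / 6 := by
          rw [hε'def]; field_simp; ring
        have e2 : B * (4 * K * δ) ≤ ζ * ε / 6 := by
          have e3 : B * (4 * K * δ) ≤ B * (4 * K * (ζ * ε / (24 * B * (K + 1)))) := by
            refine mul_le_mul_of_nonneg_left ?_ hB0.le
            exact mul_le_mul_of_nonneg_left hδK (by positivity)
          have e4 : B * (4 * K * (ζ * ε / (24 * B * (K + 1)))) = (K / (K + 1)) * (ζ * ε / 6) := by
            field_simp; ring
          have e5 : K / (K + 1) ≤ 1 := by
            rw [div_le_one (by positivity)]; linarith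
          have e6 : (K / (K + 1)) * (ζ * ε / 6) ≤ 1 * (ζ * ε / 6) :=
            mul_le_mul_of_nonneg_right e5 (by positivity)
          calc B * (4 * K * δ) ≤ B * (4 * K * (ζ * ε / (24 * B * (K + 1)))) := e3
            _ = (K / (K + 1)) * (ζ * ε / 6) := e4
            _ ≤ 1 * (ζ * ε / 6) := e6
            _ = ζ * ε / 6 := one_mul _
        have e7 : B * ((3 * ε' + 4 * K * δ) * W) = (B * (3 * ε') + B * (4 * K * δ)) * W := by ring
        rw [e7]
        refine mul_le_mul_of_nonneg_right ?_ hW0.le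
        linarith
      calc |κ (Real.exp (-(j:ℝ)) * z ^ m)| *
          |m * (∫ v in a..b, h (Real.exp v)) - h z|
          ≤ B * ((3 * ε' + 4 * K * δ) * W) :=
            mul_le_mul (hκb _ (by positivity)) (habs _ hpw) (abs_nonneg _) hB0.le
        _ ≤ ζ * ε / 3 * W := hBbound
    · -- FAR CASE
      push_neg at hnear
      have habs0 : 0 < |(j:ℝ) - m * ℓ| := lt_trans (by positivity) hnear
      have hrel : (j:ℝ) - m * ℓ = m * (a - ℓ) := by rw [hadef]; field_simp
      have haℓδ : δ < |a - ℓ| := by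
        have h18 : |(j:ℝ) - m * ℓ| = m * |a - ℓ| := by
          rw [hrel, abs_mul, abs_of_pos hm0]
        rw [h18] at hnear
        exact lt_of_mul_lt_mul_left hnear hm0.le
      set t2 : ℝ := (a - ℓ) ^ 2 with ht2def
      have ht2pos : 0 < t2 := by
        rw [ht2def, ← sq_abs]
        have : 0 < |a - ℓ| := lt_trans hδpos haℓδ
        positivity
      have hδ2t2 : δ ^ 2 ≤ t2 := by
        rw [ht2def, ← sq_abs (a - ℓ)]
        exact pow_le_pow_left₀ hδpos.le haℓδ.le 2
      have hκfar : |κ (Real.exp (-(j:ℝ)) * z ^ m)| ≤ M2 / (m ^ 2 * t2) := by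
        have h19 := hm2 (z ^ m) hzm j
        rw [hlogzm] at h19
        rw [le_div_iff₀ (by positivity)]
        have h18 : m ^ 2 * (a - ℓ) ^ 2 = |(j:ℝ) - m * ℓ| ^ 2 := by
          rw [hrel, abs_mul, abs_of_pos hm0, mul_pow, sq_abs]
        rw [ht2def, h18]
        exact h19
      have hpwfar : ∀ v ∈ Set.uIoc a b, |h (Real.exp v) - h z| ≤ K * (3 * W + 8 * t2) := by
        intro v hv
        rw [Set.uIoc_of_le hab] at hv
        have hvaℓ : |v - ℓ| ≤ 2 * |a - ℓ| := by
          have h20 : |v - ℓ| ≤ |a - ℓ| + 1/m := by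
            have h1 : a < v := hv.1
            have h2 : v ≤ b := hv.2
            have h3 := le_abs_self (a - ℓ)
            have h4 := neg_abs_le (a - ℓ)
            have h5 : (0:ℝ) < 1/m := by positivity
            rw [abs_le]
            constructor
            · linarith
            · linarith
          have h22 : 1/m ≤ |a - ℓ| :=
            le_trans (le_trans hmδ (by linarith)) haℓδ.le
          linarith
        have h23 : (v - ℓ) ^ 2 ≤ 4 * t2 := by
          rw [ht2def]
          calc (v - ℓ) ^ 2 = |v - ℓ| ^ 2 := (sq_abs _).symm
            _ ≤ (2 * |a - ℓ|) ^ 2 := pow_le_pow_left₀ (abs_nonneg _) hvaℓ 2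
            _ = 4 * |a - ℓ| ^ 2 := by ring
            _ = 4 * (a - ℓ) ^ 2 := by rw [sq_abs]
        have hv2ℓ : v ^ 2 ≤ 2 * ℓ ^ 2 + 8 * t2 := by
          linarith [arith3 v ℓ]
        calc |h (Real.exp v) - h z| ≤ |h (Real.exp v)| + |h z| := abs_sub _ _
          _ ≤ K * (1 + v ^ 2) + K * W := add_le_add (hgb v) hhzb
          _ ≤ K * (3 * W + 8 * t2) := by
              have h24 : 1 + v ^ 2 + W ≤ 3 * W + 8 * t2 := by
                rw [hWdef]; linarith
              calc K * (1 + v ^ 2) + K * W = K * ((1 + v ^ 2) + W) := by ring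
                _ ≤ K * (3 * W + 8 * t2) := mul_le_mul_of_nonneg_left h24 hK0
      have hq : 33 * (K + 1) * (M2 + 1) ≤ m ^ 2 * (δ ^ 2 * ζ * ε) := by
        rw [div_le_iff₀ (by positivity)] at hmsq
        linarith
      have hfarbound := arith_far K M2 ζ ε δ W m t2 hK0 hM20 hζ hε hδpos
        (by linarith) hW1 hm0 ht2pos hδ2t2 hq
      calc |κ (Real.exp (-(j:ℝ)) * z ^ m)| *
          |m * (∫ v in a..b, h (Real.exp v)) - h z|
          ≤ (M2 / (m ^ 2 * t2)) * (K * (3 * W + 8 * t2)) :=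
            mul_le_mul hκfar (habs _ hpwfar) (abs_nonneg _) (by positivity)
        _ ≤ ζ * ε / 3 * W := hfarbound
  -- assemble with maxprod_err
  have hκle : ∀ j : ℤ, κ (Real.exp (-(j:ℝ)) * z ^ m) ≤ B := fun j =>
    (le_abs_self _).trans (hκb _ (by positivity))
  have hκex : ∃ j : ℤ, ζ ≤ κ (Real.exp (-(j:ℝ)) * z ^ m) := by
    refine ⟨⌊m * ℓ⌋, ?_⟩
    apply hinf
    rw [hexpzm]
    constructor
    · rw [show (1:ℝ) = Real.exp 0 from Real.exp_zero.symm]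
      exact Real.exp_le_exp.mpr (by linarith [Int.floor_le (m * ℓ)])
    · exact Real.exp_le_exp.mpr (by linarith [Int.lt_floor_add_one (m * ℓ)])
  have hcj0 : ∀ j : ℤ, 0 ≤ m * ∫ v in (j:ℝ)/m..((j:ℝ)+1)/m, h (Real.exp v) := by
    intro j
    refine mul_nonneg hm0.le (intervalIntegral.integral_nonneg ?_ ?_)
    · rw [div_le_div_iff₀ hm0 hm0]
      exact mul_le_mul_of_nonneg_right (by linarith) hm0.le
    · intro u _; exact hpos _ (Real.exp_pos u)
  have main := maxprod_err (fun j : ℤ => κ (Real.exp (-(j:ℝ)) * z ^ m))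
    (fun j : ℤ => m * ∫ v in (j:ℝ)/m..((j:ℝ)+1)/m, h (Real.exp v))
    B ζ (ζ * ε / 3 * W) (h z) hζ hκle hκex hcj0 (hpos z hz) (by positivity) key
  have hfin : |MopZ κ m h z - h z| ≤ ζ * ε / 3 * W / ζ := main
  have hCζ : ζ * ε / 3 * W / ζ = ε / 3 * W := by
    rw [show ζ * ε / 3 * W = ζ * (ε / 3 * W) by ring, mul_div_cancel_left₀ _ (ne_of_gt hζ)]
  rw [hCζ] at hfin
  calc |MopZ κ m h z - h z| / W ≤ (ε / 3 * W) / W := by gcongr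
    _ = ε / 3 := mul_div_cancel_right₀ _ (ne_of_gt hW0)
    _ < ε := by linarith
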